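/- arXiv:1506.02589 — 4 statements merged into one kernel-verified Lean document; each statement's English description precedes it below -/
import Mathlib

section
/- Let G ⊆ ℝ × ℝⁿ be open, W : G → ℝⁿ continuous, and V ⊆ ℝⁿ closed. Suppose the ODE dy/dt = W(t, y) has a global uniqueness of solutions property in G \ (ℝ × V), and suppose there exist a constant C > 0 and a neighbourhood U ⊆ G of (ℝ × V) ∩ G such that |W(t, x)| ≤ C · dist(x, V) for all (t, x) ∈ U. Then the ODE dy/dt = W(t, y) has a global uniqueness of solutions property in all of G. -/
open Metric Set

/-- `y` is a solution of `y' = W(t, y)` on the open interval `(a, b)` with graph in `S`. -/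
def IsSolOn {n : ℕ} (W : ℝ × (Fin n → ℝ) → (Fin n → ℝ)) (S : Set (ℝ × (Fin n → ℝ)))
    (y : ℝ → Fin n → ℝ) (a b : ℝ) : Prop :=
  ∀ t ∈ Ioo a b, (t, y t) ∈ S ∧ HasDerivAt y (W (t, y t)) t

/-- The ODE `y' = W(t, y)` has the global uniqueness of solutions property in `S`: any two
solutions with graphs in `S`, defined on a common interval, that agree at one time agree
everywhere on that interval. -/
def GlobalUniqueness {n : ℕ} (W : ℝ × (Fin n → ℝ) → (Fin n → ℝ))
    (S : Set (ℝ × (Fin n → ℝ))) : Prop :=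
  ∀ (a b : ℝ) (y₁ y₂ : ℝ → Fin n → ℝ), IsSolOn W S y₁ a b → IsSolOn W S y₂ a b →
    ∀ t₀ ∈ Ioo a b, y₁ t₀ = y₂ t₀ → ∀ t ∈ Ioo a b, y₁ t = y₂ t

/-- Grönwall constancy: if `‖y'‖ ≤ C ‖y - y t₀‖` on a symmetric interval, `y` is constant. -/
lemma const_of_gronwall {E : Type*} [NormedAddCommGroup E] [NormedSpace ℝ E]
    (y : ℝ → E) (y' : ℝ → E) (t₀ δ C : ℝ)
    (hy : ∀ s ∈ Icc (t₀ - δ) (t₀ + δ), HasDerivAt y (y' s) s)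
    (hb : ∀ s ∈ Icc (t₀ - δ) (t₀ + δ), ‖y' s‖ ≤ C * ‖y s - y t₀‖) :
    ∀ s ∈ Icc (t₀ - δ) (t₀ + δ), y s = y t₀ := by
  rcases le_or_gt δ 0 with hδ | hδ
  · intro s hs
    have h1 : t₀ - δ ≤ s := hs.1
    have h2 : s ≤ t₀ + δ := hs.2
    have : s = t₀ := by
      rcases lt_trichotomy s t₀ with h | h | h
      · nlinarith
      · exact h
      · nlinarith
    rw [this]
  -- forward
  have fwd : ∀ s ∈ Icc t₀ (t₀ + δ), y s = y t₀ := by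
    have key := norm_le_gronwallBound_of_norm_deriv_right_le (f := fun s => y s - y t₀)
      (f' := fun s => y' s) (δ := 0) (K := C) (ε := 0) (a := t₀) (b := t₀ + δ)
      (fun s hs => ((hy s ⟨by linarith [hs.1], hs.2⟩).sub_const _).continuousAt.continuousWithinAt)
      (fun s hs => ((hy s ⟨by linarith [hs.1], le_of_lt hs.2⟩).sub_const _).hasDerivWithinAt)
      (by simp)
      (fun s hs => by
        simpa using hb s ⟨by linarith [hs.1], le_of_lt hs.2⟩)
    intro s hs
    have := key s hs
    rw [gronwallBound_ε0_δ0] at this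
    have : ‖y s - y t₀‖ ≤ 0 := this
    have := norm_le_zero_iff.mp this
    exact sub_eq_zero.mp this
  -- backward
  have bwd : ∀ s ∈ Icc t₀ (t₀ + δ), y (2 * t₀ - s) = y t₀ := by
    have key := norm_le_gronwallBound_of_norm_deriv_right_le
      (f := fun s => y (2 * t₀ - s) - y t₀)
      (f' := fun s => -y' (2 * t₀ - s)) (δ := 0) (K := C) (ε := 0) (a := t₀) (b := t₀ + δ)
      ?cont ?deriv (by rw [show 2 * t₀ - t₀ = t₀ by ring]; simp) ?bnd
    case cont =>
      intro s hs
      have hm : 2 * t₀ - s ∈ Icc (t₀ - δ) (t₀ + δ) := ⟨by linarith [hs.2], by linarith [hs.1]⟩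
      have hinner : HasDerivAt (fun s : ℝ => 2 * t₀ - s) (-1) s := by
        simpa using ((hasDerivAt_id s).const_sub (2 * t₀))
      have := ((hy _ hm).scomp s hinner).sub_const (y t₀)
      exact this.continuousAt.continuousWithinAt
    case deriv =>
      intro s hs
      have hm : 2 * t₀ - s ∈ Icc (t₀ - δ) (t₀ + δ) :=
        ⟨by linarith [hs.2.le], by linarith [hs.1]⟩
      have hinner : HasDerivAt (fun s : ℝ => 2 * t₀ - s) (-1) s := by
        simpa using ((hasDerivAt_id s).const_sub (2 * t₀))
      have h := ((hy _ hm).scomp s hinner).sub_const (y t₀)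
      simp only [neg_one_smul] at h
      exact h.hasDerivWithinAt
    case bnd =>
      intro s hs
      have hm : 2 * t₀ - s ∈ Icc (t₀ - δ) (t₀ + δ) :=
        ⟨by linarith [hs.2.le], by linarith [hs.1]⟩
      have := hb _ hm
      simpa using this
    intro s hs
    have := key s hs
    rw [gronwallBound_ε0_δ0] at this
    exact sub_eq_zero.mp (norm_le_zero_iff.mp this)
  intro s hs
  rcases le_or_gt t₀ s with h | h
  · exact fwd s ⟨h, hs.2⟩
  · have := bwd (2 * t₀ - s) ⟨by linarith, by linarith [hs.1]⟩
    simpa using this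

/-- If `W : G → ℝⁿ` is continuous on the open set `G ⊆ ℝ × ℝⁿ`, `V ⊆ ℝⁿ` is
closed, the ODE `y' = W(t,y)` has global uniqueness in `G \ (ℝ × V)`, and
`|W(t,x)| ≤ C · dist(x, V)` on a neighbourhood `U ⊆ G` of `(ℝ × V) ∩ G`, then the ODE has
global uniqueness in all of `G`. -/
theorem global_uniqueness_extension
    {n : ℕ} (G : Set (ℝ × (Fin n → ℝ))) (hG : IsOpen G)
    (W : ℝ × (Fin n → ℝ) → (Fin n → ℝ)) (hW : ContinuousOn W G)
    (V : Set (Fin n → ℝ)) (hV : IsClosed V)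
    (huniq : GlobalUniqueness W (G \ (Set.univ ×ˢ V)))
    (U : Set (ℝ × (Fin n → ℝ))) (hUopen : IsOpen U) (hUG : U ⊆ G)
    (hUnbhd : (Set.univ ×ˢ V) ∩ G ⊆ U)
    (C : ℝ) (hC : 0 < C)
    (hbound : ∀ p ∈ U, ‖W p‖ ≤ C * infDist p.2 V) :
    GlobalUniqueness W G := by
  intro a b y₁ y₂ hy₁ hy₂ t₀ ht₀ heq
  -- continuity of the solutions on (a, b)
  have hc₁ : ContinuousOn y₁ (Ioo a b) :=
    fun s hs => ((hy₁ s hs).2.continuousAt).continuousWithinAt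
  have hc₂ : ContinuousOn y₂ (Ioo a b) :=
    fun s hs => ((hy₂ s hs).2.continuousAt).continuousWithinAt
  -- key local step
  have key : ∀ t ∈ Ioo a b, y₁ t = y₂ t →
      ∃ δ > 0, ∀ s ∈ Ioo (t - δ) (t + δ), s ∈ Ioo a b ∧ y₁ s = y₂ s := by
    intro t ht hteq
    by_cases hVmem : y₁ t ∈ V
    · -- near V : both solutions are locally constant
      -- the set where the graph of yᵢ is in U is open
      have hA : ∀ (y : ℝ → Fin n → ℝ), ContinuousOn y (Ioo a b) →
          IsOpen {s | s ∈ Ioo a b ∧ (s, y s) ∈ U} := by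
        intro y hcy
        have hmap : ContinuousOn (fun s => (s, y s)) (Ioo a b) :=
          (continuousOn_id).prodMk hcy
        exact hmap.isOpen_inter_preimage isOpen_Ioo hUopen
      have hU₁ : (t, y₁ t) ∈ U := hUnbhd ⟨⟨mem_univ _, hVmem⟩, (hy₁ t ht).1⟩
      have hU₂ : (t, y₂ t) ∈ U := by rw [← hteq]; exact hU₁
      have ht₁ : t ∈ {s | s ∈ Ioo a b ∧ (s, y₁ s) ∈ U} := ⟨ht, hU₁⟩
      have ht₂ : t ∈ {s | s ∈ Ioo a b ∧ (s, y₂ s) ∈ U} := ⟨ht, hU₂⟩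
      obtain ⟨ε₁, hε₁, hball₁⟩ := Metric.isOpen_iff.mp (hA y₁ hc₁) t ht₁
      obtain ⟨ε₂, hε₂, hball₂⟩ := Metric.isOpen_iff.mp (hA y₂ hc₂) t ht₂
      set δ : ℝ := min ε₁ ε₂ / 2 with hδdef
      have hδpos : 0 < δ := by positivity
      have hsub₁ : Icc (t - δ) (t + δ) ⊆ {s | s ∈ Ioo a b ∧ (s, y₁ s) ∈ U} := by
        intro s hs
        apply hball₁
        simp only [Metric.mem_ball, Real.dist_eq, abs_lt]
        have h1 := hs.1; have h2 := hs.2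
        have : δ < ε₁ := by
          have := min_le_left ε₁ ε₂; simp only [hδdef]; linarith
        constructor <;> linarith
      have hsub₂ : Icc (t - δ) (t + δ) ⊆ {s | s ∈ Ioo a b ∧ (s, y₂ s) ∈ U} := by
        intro s hs
        apply hball₂
        simp only [Metric.mem_ball, Real.dist_eq, abs_lt]
        have h1 := hs.1; have h2 := hs.2
        have : δ < ε₂ := by
          have := min_le_right ε₁ ε₂; simp only [hδdef]; linarith
        constructor <;> linarith
      have hconst : ∀ (y : ℝ → Fin n → ℝ), y t ∈ V →
          (∀ s ∈ Ioo a b, HasDerivAt y (W (s, y s)) s) →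
          Icc (t - δ) (t + δ) ⊆ {s | s ∈ Ioo a b ∧ (s, y s) ∈ U} →
          ∀ s ∈ Icc (t - δ) (t + δ), y s = y t := by
        intro y hyV hyd hsub
        refine const_of_gronwall y (fun s => W (s, y s)) t δ C
          (fun s hs => hyd s (hsub hs).1) (fun s hs => ?_)
        calc ‖W (s, y s)‖ ≤ C * infDist (y s) V := hbound _ (hsub hs).2
          _ ≤ C * ‖y s - y t‖ := by
              apply mul_le_mul_of_nonneg_left _ hC.le
              rw [← dist_eq_norm]
              exact infDist_le_dist_of_mem hyV
      have h1 := hconst y₁ hVmem (fun s hs => (hy₁ s hs).2) hsub₁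
      have h2 := hconst y₂ (hteq ▸ hVmem) (fun s hs => (hy₂ s hs).2) hsub₂
      refine ⟨δ, hδpos, fun s hs => ?_⟩
      have hs' : s ∈ Icc (t - δ) (t + δ) := ⟨hs.1.le, hs.2.le⟩
      exact ⟨(hsub₁ hs').1, by rw [h1 s hs', h2 s hs', hteq]⟩
    · -- away from V : use the uniqueness hypothesis in G \ (ℝ × V)
      have hB : IsOpen {s | s ∈ Ioo a b ∧ y₁ s ∉ V ∧ y₂ s ∉ V} := by
        have h1 := hc₁.isOpen_inter_preimage isOpen_Ioo hV.isOpen_compl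
        have h2 := hc₂.isOpen_inter_preimage isOpen_Ioo hV.isOpen_compl
        have h3 := h1.inter h2
        convert h3 using 1
        ext s
        simp only [Set.mem_inter_iff, Set.mem_setOf_eq, Set.mem_preimage, Set.mem_compl_iff]
        tauto
      have htB : t ∈ {s | s ∈ Ioo a b ∧ y₁ s ∉ V ∧ y₂ s ∉ V} :=
        ⟨ht, hVmem, by rw [← hteq]; exact hVmem⟩
      obtain ⟨δ, hδ, hball⟩ := Metric.isOpen_iff.mp hB t htB
      have hsub : Ioo (t - δ) (t + δ) ⊆ {s | s ∈ Ioo a b ∧ y₁ s ∉ V ∧ y₂ s ∉ V} := by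
        intro s hs
        apply hball
        simp only [Metric.mem_ball, Real.dist_eq, abs_lt]
        exact ⟨by linarith [hs.1], by linarith [hs.2]⟩
      have hsol : ∀ (y : ℝ → Fin n → ℝ), IsSolOn W G y a b →
          (∀ s ∈ Ioo (t - δ) (t + δ), y s ∉ V) →
          IsSolOn W (G \ (Set.univ ×ˢ V)) y (t - δ) (t + δ) := by
        intro y hy hnv s hs
        have hs' := (hsub hs).1
        exact ⟨⟨(hy s hs').1, by simp [hnv s hs]⟩, (hy s hs').2⟩
      have := huniq (t - δ) (t + δ) y₁ y₂
        (hsol y₁ hy₁ (fun s hs => (hsub hs).2.1))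
        (hsol y₂ hy₂ (fun s hs => (hsub hs).2.2))
        t ⟨by linarith, by linarith⟩ hteq
      exact ⟨δ, hδ, fun s hs => ⟨(hsub hs).1, this s hs⟩⟩
  -- connectedness argument
  haveI : PreconnectedSpace (Ioo a b) := Subtype.preconnectedSpace isPreconnected_Ioo
  set F : Set (Ioo a b) := {s | y₁ s = y₂ s} with hF
  have hFclosed : IsClosed F :=
    isClosed_eq (hc₁.restrict.congr fun _ => rfl) (hc₂.restrict.congr fun _ => rfl)
  have hFopen : IsOpen F := by
    rw [isOpen_iff_mem_nhds]
    rintro ⟨t, ht⟩ htF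
    obtain ⟨δ, hδ, hloc⟩ := key t ht htF
    rw [_root_.mem_nhds_iff]
    refine ⟨(Subtype.val : Ioo a b → ℝ) ⁻¹' Ioo (t - δ) (t + δ), ?_, ?_, ?_⟩
    · rintro ⟨s, hsI⟩ hs
      exact (hloc s hs).2
    · exact continuous_subtype_val.isOpen_preimage _ isOpen_Ioo
    · exact mem_preimage.mpr ⟨by linarith, by linarith⟩
  have hFne : F.Nonempty := ⟨⟨t₀, ht₀⟩, heq⟩
  have := IsClopen.eq_univ ⟨hFclosed, hFopen⟩ hFne
  intro t ht
  have : (⟨t, ht⟩ : Ioo a b) ∈ F := this ▸ mem_univ _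
  exact this
end

section
/- Let f, g : (ℝⁿ, 0) → (ℝ, 0) be C^{r+1} functions, r ∈ ℕ. If (g − f) belongs to the (r+2)-nd power of the Jacobi ideal 𝒥_f C^r(n) (the ideal in the ring of C^r germs generated by the partial derivatives ∂f/∂x₁, …, ∂f/∂xₙ), then there exist a neighbourhood U of 0 and a constant C > 0 such that for every multi-index m with |m| ≤ r, |∂^m(g − f)(x)| ≤ C|∇f(x)|^{r+2−|m|} for all x ∈ U. -/
open Metric Set

/-- Iterated partial derivative in the coordinate directions given by the list `L`. -/
noncomputable def multiPartial {n : ℕ} (L : List (Fin n)) (f : (Fin n → ℝ) → ℝ) :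
    (Fin n → ℝ) → ℝ :=
  L.foldr (fun i g => fun x => fderiv ℝ g x (Pi.single i 1)) f

/-- The list of coordinate directions corresponding to a multi-index `m : Fin n → ℕ`. -/
def multiIndexList {n : ℕ} (m : Fin n → ℕ) : List (Fin n) :=
  (List.finRange n).flatMap fun i => List.replicate (m i) i

/-- `p` belongs (as a germ at `0`) to the `M`-th power of the ideal of `C^k` germs generated
by `q₁, …, q_m`. -/
def MemIdealPowGerm {n m : ℕ} (k M : ℕ) (q : Fin m → (Fin n → ℝ) → ℝ)
    (p : (Fin n → ℝ) → ℝ) : Prop :=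
  ∃ V ∈ nhds (0 : Fin n → ℝ), ∃ c : (Fin M → Fin m) → (Fin n → ℝ) → ℝ,
    (∀ α, ContDiffOn ℝ k (c α) V) ∧
    ∀ x ∈ V, p x = ∑ α : Fin M → Fin m, c α x * ∏ j, q (α j) x

namespace JacobiAux

variable {n : ℕ}

/-- First-order partial derivative of `h` in the coordinate direction `i`. -/
noncomputable def pd (h : (Fin n → ℝ) → ℝ) (i : Fin n) (x : Fin n → ℝ) : ℝ :=
  fderiv ℝ h x (Pi.single i 1)

/-- `h` is, near `0`, a finite sum of terms `c · ∏_{j < s} ∂f/∂x_{σ j}` with `C^k`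
coefficients `c`. -/
def Good (f : (Fin n → ℝ) → ℝ) (k s : ℕ) (h : (Fin n → ℝ) → ℝ) : Prop :=
  ∃ V : Set (Fin n → ℝ), IsOpen V ∧ (0 : Fin n → ℝ) ∈ V ∧
    ∃ (ι : Type) (_ : Fintype ι) (c : ι → (Fin n → ℝ) → ℝ) (σ : ι → Fin s → Fin n),
      (∀ t, ContDiffOn ℝ k (c t) V) ∧
      ∀ x ∈ V, h x = ∑ t, c t x * ∏ j, pd f (σ t j) x

theorem Good.congr {f h h' : (Fin n → ℝ) → ℝ} {k s : ℕ} (hg : Good f k s h)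
    {W : Set (Fin n → ℝ)} (hW : IsOpen W) (h0 : (0 : Fin n → ℝ) ∈ W)
    (he : ∀ x ∈ W, h' x = h x) : Good f k s h' := by
  obtain ⟨V, hVo, hV0, ι, _, c, σ, hc, heq⟩ := hg
  exact ⟨V ∩ W, hVo.inter hW, ⟨hV0, h0⟩, ι, ‹_›, c, σ,
    fun t => (hc t).mono inter_subset_left,
    fun x hx => (he x hx.2).trans (heq x hx.1)⟩

theorem good_zero (f : (Fin n → ℝ) → ℝ) (k s : ℕ) : Good f k s (fun _ => 0) :=
  ⟨univ, isOpen_univ, mem_univ _, PEmpty, inferInstance, (fun t => t.elim), (fun t => t.elim),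
    fun t => t.elim, fun x _ => by simp⟩

theorem Good.add {f h₁ h₂ : (Fin n → ℝ) → ℝ} {k s : ℕ} (g1 : Good f k s h₁)
    (g2 : Good f k s h₂) : Good f k s (fun x => h₁ x + h₂ x) := by
  obtain ⟨V₁, o1, m1, ι₁, _, c₁, σ₁, hc₁, he₁⟩ := g1
  obtain ⟨V₂, o2, m2, ι₂, _, c₂, σ₂, hc₂, he₂⟩ := g2
  refine ⟨V₁ ∩ V₂, o1.inter o2, ⟨m1, m2⟩, ι₁ ⊕ ι₂, inferInstance,
    Sum.elim c₁ c₂, Sum.elim σ₁ σ₂, ?_, ?_⟩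
  · rintro (t | t)
    exacts [(hc₁ t).mono inter_subset_left, (hc₂ t).mono inter_subset_right]
  · intro x hx
    show h₁ x + h₂ x = _
    rw [Fintype.sum_sum_type, he₁ x hx.1, he₂ x hx.2]
    simp

theorem good_sum {f : (Fin n → ℝ) → ℝ} {k s : ℕ} {ι : Type*} [DecidableEq ι]
    (S : Finset ι) (h : ι → (Fin n → ℝ) → ℝ) (hg : ∀ i ∈ S, Good f k s (h i)) :
    Good f k s (fun x => ∑ i ∈ S, h i x) := by
  induction S using Finset.induction_on with
  | empty => simpa using good_zero f k s
  | @insert a S' hni ih =>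
    have : (fun x => ∑ i ∈ insert a S', h i x) = fun x => h a x + ∑ i ∈ S', h i x :=
      funext fun x => Finset.sum_insert hni
    rw [this]
    exact (hg a (Finset.mem_insert_self _ _)).add
      (ih fun i hi => hg i (Finset.mem_insert_of_mem hi))

theorem good_single {f : (Fin n → ℝ) → ℝ} {k s : ℕ} {V : Set (Fin n → ℝ)} (hVo : IsOpen V)
    (h0 : (0 : Fin n → ℝ) ∈ V) {c : (Fin n → ℝ) → ℝ} (hc : ContDiffOn ℝ k c V)
    (σ : Fin s → Fin n) : Good f k s (fun x => c x * ∏ j, pd f (σ j) x) :=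
  ⟨V, hVo, h0, PUnit, inferInstance, fun _ => c, fun _ => σ, fun _ => hc, fun x _ => by simp⟩

theorem prod_erase_eq {s : ℕ} (F : Fin (s + 1) → ℝ) (j : Fin (s + 1)) :
    ∏ l ∈ Finset.univ.erase j, F l = ∏ m : Fin s, F (j.succAbove m) := by
  rw [← Finset.compl_singleton, ← Fin.image_succAbove_univ,
    Finset.prod_image fun a _ b _ hab => Fin.succAbove_right_injective hab]

theorem contDiffOn_pd {f : (Fin n → ℝ) → ℝ} {U : Set (Fin n → ℝ)} {M k : ℕ}
    (hf : ContDiffOn ℝ M f U) (hU : IsOpen U) (hk : k + 1 ≤ M) (i : Fin n) :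
    ContDiffOn ℝ k (pd f i) U := by
  have h1 : ContDiffOn ℝ k (fderiv ℝ f) U :=
    hf.fderiv_of_isOpen hU (by exact_mod_cast hk)
  exact h1.clm_apply contDiffOn_const

theorem Good.step {f : (Fin n → ℝ) → ℝ} {U₀ : Set (Fin n → ℝ)} {r k s : ℕ}
    (hU₀ : U₀ ∈ nhds (0 : Fin n → ℝ)) (hf : ContDiffOn ℝ (r + 1 : ℕ) f U₀)
    (hk : k + 1 ≤ r) {h : (Fin n → ℝ) → ℝ} (hg : Good f (k + 1) (s + 1) h) (i : Fin n) :
    Good f k s (pd h i) := by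
  classical
  obtain ⟨V, hVo, hV0, ι, _, c, σ, hc, heq⟩ := hg
  set W : Set (Fin n → ℝ) := V ∩ interior U₀ with hWdef
  have hWo : IsOpen W := hVo.inter isOpen_interior
  have hW0 : (0 : Fin n → ℝ) ∈ W := ⟨hV0, mem_interior_iff_mem_nhds.2 hU₀⟩
  have hWV : W ⊆ V := inter_subset_left
  have hWU : W ⊆ interior U₀ := inter_subset_right
  have hfint : ContDiffOn ℝ (r + 1 : ℕ) f (interior U₀) := hf.mono interior_subset
  have hq : ∀ l : Fin n, ContDiffOn ℝ r (pd f l) (interior U₀) := fun l =>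
    contDiffOn_pd hfint isOpen_interior le_rfl l
  have hq2 : ∀ l : Fin n, ContDiffOn ℝ k (pd (pd f l) i) (interior U₀) := fun l =>
    contDiffOn_pd (hq l) isOpen_interior hk i
  -- differentiability at points of W
  have hqd : ∀ x ∈ W, ∀ l : Fin n, DifferentiableAt ℝ (pd f l) x := by
    intro x hx l
    have hr1 : 1 ≤ r := le_trans (Nat.le_add_left 1 k) hk
    exact ((hq l).differentiableOn
      (by exact_mod_cast (Nat.one_le_iff_ne_zero.mp hr1))).differentiableAt (isOpen_interior.mem_nhds (hWU hx))
  have hcd : ∀ x ∈ W, ∀ t, DifferentiableAt ℝ (c t) x := by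
    intro x hx t
    exact ((hc t).differentiableOn (by exact_mod_cast Nat.succ_ne_zero k)).differentiableAt
      (hVo.mem_nhds (hWV hx))
  -- key formula for the derivative on W
  have key : ∀ x ∈ W, pd h i x =
      ∑ t, (c t x * ∑ j, (∏ l ∈ Finset.univ.erase j, pd f (σ t l) x) * pd (pd f (σ t j)) i x
        + (∏ j, pd f (σ t j) x) * fderiv ℝ (c t) x (Pi.single i 1)) := by
    intro x hx
    have hDH : HasFDerivAt (fun y => ∑ t, c t y * ∏ j, pd f (σ t j) y)
        (∑ t, (c t x • (∑ j, (∏ l ∈ Finset.univ.erase j, pd f (σ t l) x) •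
            fderiv ℝ (pd f (σ t j)) x)
          + (∏ j, pd f (σ t j) x) • fderiv ℝ (c t) x)) x := by
      apply HasFDerivAt.fun_sum
      intro t _
      have hp : HasFDerivAt (fun y => ∏ j, pd f (σ t j) y)
          (∑ j, (∏ l ∈ Finset.univ.erase j, pd f (σ t l) x) • fderiv ℝ (pd f (σ t j)) x) x :=
        HasFDerivAt.finset_prod fun j _ => (hqd x hx (σ t j)).hasFDerivAt
      exact (hcd x hx t).hasFDerivAt.mul hp
    have hcongr : fderiv ℝ h x = fderiv ℝ (fun y => ∑ t, c t y * ∏ j, pd f (σ t j) y) x :=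
      Filter.EventuallyEq.fderiv_eq
        (Filter.eventuallyEq_of_mem (hWo.mem_nhds hx) fun y hy => heq y (hWV hy))
    rw [pd, hcongr, hDH.fderiv]
    simp [ContinuousLinearMap.sum_apply, ContinuousLinearMap.add_apply,
      ContinuousLinearMap.smul_apply, smul_eq_mul, Finset.mul_sum, pd]
  -- the derivative is Good
  have hGoal : Good f k s (fun x => ∑ t,
      ((fun x => fderiv ℝ (c t) x (Pi.single i 1) * pd f (σ t (Fin.last s)) x) x *
          ∏ m : Fin s, pd f (σ t (Fin.castSucc m)) x
        + ∑ j : Fin (s + 1),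
          (fun x => c t x * pd (pd f (σ t j)) i x) x *
            ∏ m : Fin s, pd f (σ t (j.succAbove m)) x)) := by
    apply good_sum Finset.univ
    intro t _
    apply Good.add
    · apply good_single hWo hW0
      exact (contDiffOn_pd ((hc t).mono hWV) hWo le_rfl i).mul
        (((hq (σ t (Fin.last s))).mono hWU).of_le
          (by exact_mod_cast le_trans (Nat.le_succ k) hk))
    · apply good_sum Finset.univ
      intro j _
      apply good_single hWo hW0
      exact (((hc t).mono hWV).of_le (by exact_mod_cast Nat.le_succ k)).mul
        ((hq2 (σ t j)).mono hWU)
  refine hGoal.congr hWo hW0 ?_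
  intro x hx
  rw [key x hx]
  refine Finset.sum_congr rfl fun t _ => ?_
  have e1 : ∀ j : Fin (s + 1), (∏ m : Fin s, pd f (σ t (j.succAbove m)) x)
      = ∏ l ∈ Finset.univ.erase j, pd f (σ t l) x := fun j =>
      (prod_erase_eq (fun l => pd f (σ t l) x) j).symm
  simp_rw [e1]
  rw [Fin.prod_univ_castSucc (f := fun j => pd f (σ t j) x), Finset.mul_sum, add_comm]
  congr 1
  · ring
  · exact Finset.sum_congr rfl fun j _ => by ring

theorem Good.bound {f h : (Fin n → ℝ) → ℝ} {k s : ℕ} (hg : Good f k s h) :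
    ∃ U ∈ nhds (0 : Fin n → ℝ), ∃ C > (0 : ℝ), ∀ x ∈ U, |h x| ≤ C * ‖fderiv ℝ f x‖ ^ s := by
  obtain ⟨V, hVo, hV0, ι, _, c, σ, hc, heq⟩ := hg
  have hcont : ∀ t, ContinuousAt (c t) 0 := fun t =>
    (hc t).continuousOn.continuousAt (hVo.mem_nhds hV0)
  have hev : ∀ᶠ x in nhds (0 : Fin n → ℝ), ∀ t, |c t x| ≤ |c t 0| + 1 := by
    rw [Filter.eventually_all]
    intro t
    exact ((hcont t).abs.eventually (gt_mem_nhds (lt_add_one _))).mono fun x hx => hx.le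
  refine ⟨V ∩ {x | ∀ t, |c t x| ≤ |c t 0| + 1}, Filter.inter_mem (hVo.mem_nhds hV0) hev,
    (∑ t, (|c t 0| + 1)) + 1, ?_, ?_⟩
  · have : (0 : ℝ) ≤ ∑ t, (|c t 0| + 1) :=
      Finset.sum_nonneg fun t _ => by positivity
    linarith
  · intro x hx
    have hpd : ∀ l : Fin n, |pd f l x| ≤ ‖fderiv ℝ f x‖ := by
      intro l
      calc |pd f l x| = ‖fderiv ℝ f x (Pi.single l 1)‖ := (Real.norm_eq_abs _).symm
        _ ≤ ‖fderiv ℝ f x‖ * ‖(Pi.single l 1 : Fin n → ℝ)‖ := (fderiv ℝ f x).le_opNorm _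
        _ = ‖fderiv ℝ f x‖ := by rw [Pi.norm_single, norm_one, mul_one]
    have hprod : ∀ t, |∏ j, pd f (σ t j) x| ≤ ‖fderiv ℝ f x‖ ^ s := by
      intro t
      rw [Finset.abs_prod]
      calc ∏ j, |pd f (σ t j) x| ≤ ∏ _j : Fin s, ‖fderiv ℝ f x‖ :=
            Finset.prod_le_prod (fun j _ => abs_nonneg _) (fun j _ => hpd _)
        _ = ‖fderiv ℝ f x‖ ^ s := by simp
    calc |h x| = |∑ t, c t x * ∏ j, pd f (σ t j) x| := by rw [heq x hx.1]
      _ ≤ ∑ t, |c t x * ∏ j, pd f (σ t j) x| := Finset.abs_sum_le_sum_abs _ _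
      _ ≤ ∑ t, (|c t 0| + 1) * ‖fderiv ℝ f x‖ ^ s := by
          refine Finset.sum_le_sum fun t _ => ?_
          rw [abs_mul]
          exact mul_le_mul (hx.2 t) (hprod t) (abs_nonneg _) (by positivity)
      _ = (∑ t, (|c t 0| + 1)) * ‖fderiv ℝ f x‖ ^ s := (Finset.sum_mul _ _ _).symm
      _ ≤ ((∑ t, (|c t 0| + 1)) + 1) * ‖fderiv ℝ f x‖ ^ s := by
          apply mul_le_mul_of_nonneg_right (by linarith) (by positivity)

theorem good_of_mem {r : ℕ} {f p : (Fin n → ℝ) → ℝ}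
    (hmem : MemIdealPowGerm r (r + 2) (fun i x => fderiv ℝ f x (Pi.single i 1)) p) :
    Good f r (r + 2) p := by
  obtain ⟨V, hV, c, hc, heq⟩ := hmem
  exact ⟨interior V, isOpen_interior, mem_interior_iff_mem_nhds.2 hV,
    (Fin (r + 2) → Fin n), inferInstance, c, fun α => α,
    fun α => (hc α).mono interior_subset, fun x hx => heq x (interior_subset hx)⟩

theorem good_multiPartial {r : ℕ} {f g : (Fin n → ℝ) → ℝ} {U₀ : Set (Fin n → ℝ)}
    (hU₀ : U₀ ∈ nhds (0 : Fin n → ℝ)) (hf : ContDiffOn ℝ (r + 1 : ℕ) f U₀)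
    (hmem : MemIdealPowGerm r (r + 2)
      (fun i x => fderiv ℝ f x (Pi.single i 1)) (fun y => g y - f y)) :
    ∀ L : List (Fin n), L.length ≤ r →
      Good f (r - L.length) (r + 2 - L.length) (multiPartial L (fun y => g y - f y)) := by
  intro L
  induction L with
  | nil =>
    intro _
    simpa [multiPartial] using good_of_mem hmem
  | cons i L ih =>
    intro hlen
    have hL : L.length ≤ r := by simpa using Nat.le_of_succ_le hlen
    have h1 := ih hL
    have hlt : L.length < r := by simpa using hlen
    have e1 : r - L.length = (r - (i :: L).length) + 1 := by
      simp only [List.length_cons]; omega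
    have e2 : r + 2 - L.length = (r + 2 - (i :: L).length) + 1 := by
      simp only [List.length_cons]; omega
    rw [e1, e2] at h1
    have hk : (r - (i :: L).length) + 1 ≤ r := by
      simp only [List.length_cons]; omega
    exact h1.step hU₀ hf hk i

end JacobiAux

/-- Corollary 1 of the paper: if `f, g` are `C^{r+1}` near `0`, vanish at `0`,
and `g − f ∈ (𝒥_f C^r(n))^{r+2}`, then for every multi-index `m` with `|m| ≤ r`,
`|∂^m(g − f)(x)| ≤ C|∇f(x)|^{r+2−|m|}` in a neighbourhood of `0`, for some `C > 0`. -/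
theorem jacobi_ideal_pow_bound
    {n : ℕ} (r : ℕ) (hr : 0 < r) (f g : (Fin n → ℝ) → ℝ)
    (hf0 : f 0 = 0) (hg0 : g 0 = 0)
    (U₀ : Set (Fin n → ℝ)) (hU₀ : U₀ ∈ nhds (0 : Fin n → ℝ))
    (hf : ContDiffOn ℝ (r + 1) f U₀) (hg : ContDiffOn ℝ (r + 1) g U₀)
    (hmem : MemIdealPowGerm r (r + 2)
      (fun i x => fderiv ℝ f x (Pi.single i 1)) (fun y => g y - f y)) :
    ∃ U ∈ nhds (0 : Fin n → ℝ), ∃ C > (0 : ℝ),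
      ∀ m : Fin n → ℕ, (∑ i, m i) ≤ r → ∀ x ∈ U,
        |multiPartial (multiIndexList m) (fun y => g y - f y) x|
          ≤ C * ‖fderiv ℝ f x‖ ^ (r + 2 - (∑ i, m i)) := by
  classical
  have hf' : ContDiffOn ℝ (r + 1 : ℕ) f U₀ := by exact_mod_cast hf
  have key : ∀ m : Fin n → ℕ, (∑ i, m i) ≤ r →
      ∃ U ∈ nhds (0 : Fin n → ℝ), ∃ C > (0 : ℝ), ∀ x ∈ U,
        |multiPartial (multiIndexList m) (fun y => g y - f y) x|
          ≤ C * ‖fderiv ℝ f x‖ ^ (r + 2 - (∑ i, m i)) := by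
    intro m hm
    have hlen : (multiIndexList m).length = ∑ i, m i := by
      simp [multiIndexList, List.length_flatMap, Fin.sum_univ_def, Function.comp_def,
        List.length_replicate]
    have h1 := JacobiAux.good_multiPartial hU₀ hf' hmem (multiIndexList m)
      (by rw [hlen]; exact hm)
    rw [hlen] at h1
    exact h1.bound
  have key2 : ∀ m' : Fin n → Fin (r + 1), ∃ U ∈ nhds (0 : Fin n → ℝ), ∃ C > (0 : ℝ),
      (∑ i, (m' i : ℕ)) ≤ r → ∀ x ∈ U,
        |multiPartial (multiIndexList fun i => (m' i : ℕ)) (fun y => g y - f y) x|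
          ≤ C * ‖fderiv ℝ f x‖ ^ (r + 2 - ∑ i, (m' i : ℕ)) := by
    intro m'
    by_cases hm : (∑ i, (m' i : ℕ)) ≤ r
    · obtain ⟨U, hU, C, hC, hb⟩ := key _ hm
      exact ⟨U, hU, C, hC, fun _ => hb⟩
    · exact ⟨univ, Filter.univ_mem, 1, one_pos, fun h => absurd h hm⟩
  choose U hU C hC hb using key2
  refine ⟨⋂ m', U m', Filter.iInter_mem.2 hU, (∑ m', C m') + 1, ?_, ?_⟩
  · have : (0 : ℝ) ≤ ∑ m', C m' := Finset.sum_nonneg fun t _ => (hC t).le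
    linarith
  · intro m hm x hx
    have hmi : ∀ i, m i < r + 1 := fun i =>
      Nat.lt_succ_of_le (le_trans (Finset.single_le_sum (f := m)
        (fun i _ => Nat.zero_le _) (Finset.mem_univ i)) hm)
    set m' : Fin n → Fin (r + 1) := fun i => ⟨m i, hmi i⟩ with hm'def
    have hcoe : (fun i => (m' i : ℕ)) = m := rfl
    have hb' := hb m' (by rw [hcoe]; exact hm) x (Set.mem_iInter.1 hx m')
    rw [hcoe] at hb'
    refine le_trans hb' ?_
    have hCle : C m' ≤ (∑ t, C t) + 1 := by
      have := Finset.single_le_sum (f := C) (fun t _ => (hC t).le) (Finset.mem_univ m')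
      linarith
    exact mul_le_mul_of_nonneg_right hCle (by positivity)
end

section
/- Let f, g : (ℝⁿ, 0) → (ℝ, 0) be real analytic functions. If f and g are C¹-right equivalent (i.e., f = g ∘ φ near 0 for some C¹ diffeomorphism φ : (ℝⁿ, 0) → (ℝⁿ, 0)), then their Łojasiewicz exponents in the gradient inequality are equal: 𝔏₀(f) = 𝔏₀(g). -/
open Metric Set Filter

/-- The set of Łojasiewicz gradient exponents of `f` at `0`: exponents `η > 0` such that
`|∇f(x)| ≥ C|f(x)|^η` holds near `0` for some `C > 0`. -/
def lojGradExponents {n : ℕ} (f : (Fin n → ℝ) → ℝ) : Set ℝ :=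
  {η : ℝ | 0 < η ∧ ∃ C > (0 : ℝ), ∀ᶠ x in nhds (0 : Fin n → ℝ),
    C * |f x| ^ η ≤ ‖fderiv ℝ f x‖}

/-- The Łojasiewicz exponent of `f` in the gradient inequality at `0`. -/
noncomputable def lojExp {n : ℕ} (f : (Fin n → ℝ) → ℝ) : ℝ :=
  sInf (lojGradExponents f)

lemma loj_subset {n : ℕ} {f g : (Fin n → ℝ) → ℝ} {φ ψ : (Fin n → ℝ) → (Fin n → ℝ)}
    {U V : Set (Fin n → ℝ)}
    (hU : IsOpen U) (hV : IsOpen V) (h0U : (0 : Fin n → ℝ) ∈ U) (h0V : (0 : Fin n → ℝ) ∈ V)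
    (hφ0 : φ 0 = 0)
    (hφ : ContDiffOn ℝ 1 φ U) (hψ : ContDiffOn ℝ 1 ψ V)
    (hmapφ : MapsTo φ U V)
    (hψφ : ∀ x ∈ U, ψ (φ x) = x)
    (hfg : ∀ x ∈ U, f x = g (φ x))
    (hgf : ∀ y ∈ V, g y = f (ψ y))
    (hfd : ∀ᶠ y in nhds (0 : Fin n → ℝ), DifferentiableAt ℝ f y) :
    lojGradExponents g ⊆ lojGradExponents f := by
  rintro η ⟨hη, C, hC, hev⟩
  set M : ℝ := ‖fderiv ℝ ψ 0‖ + 1 with hM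
  have hM0 : (0 : ℝ) < M := by positivity
  refine ⟨hη, C / M, by positivity, ?_⟩
  -- φ is continuous at 0 and φ 0 = 0
  have hφc : ContinuousAt φ 0 := (hφ.continuousOn.continuousAt (hU.mem_nhds h0U))
  have hφt : Tendsto φ (nhds 0) (nhds (0 : Fin n → ℝ)) := by
    have := hφc.tendsto
    rwa [hφ0] at this
  -- fderiv ψ is continuous at 0, hence its norm is eventually < M along φ
  have hψc : ContinuousAt (fderiv ℝ ψ) 0 :=
    (hψ.continuousOn_fderiv_of_isOpen hV le_rfl).continuousAt (hV.mem_nhds h0V)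
  have hnorm : Tendsto (fun y => ‖fderiv ℝ ψ y‖) (nhds 0) (nhds ‖fderiv ℝ ψ 0‖) :=
    (continuous_norm.continuousAt.comp hψc)
  have hMev : ∀ᶠ y in nhds (0 : Fin n → ℝ), ‖fderiv ℝ ψ y‖ < M :=
    hnorm.eventually_lt_const (by simp [hM])
  have hUev : ∀ᶠ x in nhds (0 : Fin n → ℝ), x ∈ U := hU.mem_nhds h0U
  filter_upwards [hUev, hφt.eventually hev, hφt.eventually hMev, hfd] with x hxU hgx hMx hdfx
  have hφxV : φ x ∈ V := hmapφ hxU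
  -- f x = g (φ x)
  have hfx : f x = g (φ x) := hfg x hxU
  -- fderiv g (φ x) = (fderiv f x) ∘ (fderiv ψ (φ x))
  have heq : g =ᶠ[nhds (φ x)] (f ∘ ψ) :=
    Filter.eventuallyEq_of_mem (hV.mem_nhds hφxV) (fun y hy => hgf y hy)
  have hdψ : DifferentiableAt ℝ ψ (φ x) :=
    (hψ.contDiffAt (hV.mem_nhds hφxV)).differentiableAt one_ne_zero
  have hdf' : DifferentiableAt ℝ f (ψ (φ x)) := by rw [hψφ x hxU]; exact hdfx
  have hcomp : fderiv ℝ g (φ x) =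
      (fderiv ℝ f (ψ (φ x))).comp (fderiv ℝ ψ (φ x)) := by
    rw [heq.fderiv_eq]
    exact fderiv_comp (φ x) hdf' hdψ
  have hnle : ‖fderiv ℝ g (φ x)‖ ≤ ‖fderiv ℝ f x‖ * M := by
    rw [hcomp, hψφ x hxU]
    calc ‖(fderiv ℝ f x).comp (fderiv ℝ ψ (φ x))‖
        ≤ ‖fderiv ℝ f x‖ * ‖fderiv ℝ ψ (φ x)‖ := ContinuousLinearMap.opNorm_comp_le _ _
      _ ≤ ‖fderiv ℝ f x‖ * M := by
          exact mul_le_mul_of_nonneg_left hMx.le (norm_nonneg _)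
  have key : C * |f x| ^ η ≤ ‖fderiv ℝ f x‖ * M := by
    rw [hfx]; exact le_trans hgx hnle
  rw [div_mul_eq_mul_div, div_le_iff₀ hM0]
  linarith [key]

/-- Proposition 1 of the paper: if `f, g` are real analytic germs at `0`
vanishing at `0` and `C¹`-right equivalent, then `𝔏₀(f) = 𝔏₀(g)`. -/
theorem lojExp_eq_of_c1_right_equivalent
    {n : ℕ} (f g : (Fin n → ℝ) → ℝ)
    (hf0 : f 0 = 0) (hg0 : g 0 = 0)
    (hf : AnalyticAt ℝ f 0) (hg : AnalyticAt ℝ g 0)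
    (hequiv : ∃ (φ ψ : (Fin n → ℝ) → (Fin n → ℝ)) (U V : Set (Fin n → ℝ)),
      IsOpen U ∧ IsOpen V ∧ (0 : Fin n → ℝ) ∈ U ∧ (0 : Fin n → ℝ) ∈ V ∧
      φ 0 = 0 ∧
      ContDiffOn ℝ 1 φ U ∧ ContDiffOn ℝ 1 ψ V ∧
      MapsTo φ U V ∧ MapsTo ψ V U ∧
      (∀ x ∈ U, ψ (φ x) = x) ∧ (∀ y ∈ V, φ (ψ y) = y) ∧
      (∀ x ∈ U, f x = g (φ x))) :
    lojExp f = lojExp g := by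
  obtain ⟨φ, ψ, U, V, hU, hV, h0U, h0V, hφ0, hφ, hψ, hmapφ, hmapψ, hψφ, hφψ, hfg⟩ := hequiv
  have hψ0 : ψ 0 = 0 := by
    have := hψφ 0 h0U
    rwa [hφ0] at this
  have hgf : ∀ y ∈ V, g y = f (ψ y) := by
    intro y hy
    rw [hfg (ψ y) (hmapψ hy), hφψ y hy]
  have hfg' : ∀ x ∈ U, f x = g (φ x) := hfg
  -- differentiability near 0 from analyticity
  have hfd : ∀ᶠ y in nhds (0 : Fin n → ℝ), DifferentiableAt ℝ f y :=
    hf.eventually_analyticAt.mono (fun y hy => hy.differentiableAt)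
  have hgd : ∀ᶠ y in nhds (0 : Fin n → ℝ), DifferentiableAt ℝ g y :=
    hg.eventually_analyticAt.mono (fun y hy => hy.differentiableAt)
  have h1 : lojGradExponents g ⊆ lojGradExponents f :=
    loj_subset hU hV h0U h0V hφ0 hφ hψ hmapφ hψφ hfg' hgf hfd
  have h2 : lojGradExponents f ⊆ lojGradExponents g :=
    loj_subset hV hU h0V h0U hψ0 hψ hφ hmapψ hφψ hgf hfg' hgd
  unfold lojExp
  rw [Set.Subset.antisymm h2 h1]
end

section
/- Let Z ⊆ ℝⁿ be closed, G ⊆ ℝ × ℝⁿ open, r ∈ ℕ, and let X : G → ℝ be a function vanishing on G ∩ (ℝ × Z), of class C^r on G \ (ℝ × Z), and satisfying |∂^α X(ξ, x)| ≤ A · dist(x, Z)^{r+1−|α|} for all (ξ, x) ∈ G \ (ℝ × Z) and all multi-indices α ∈ ℕ₀^{n+1} with |α| ≤ r, for some constant A > 0. Then X is of class C^r on all of G and all partial derivatives ∂^α X with |α| ≤ r vanish on G ∩ (ℝ × Z). -/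
open Metric Set
open Asymptotics

namespace CRExt

variable {n : ℕ}

lemma multiPartial_nil (f : (Fin n → ℝ) → ℝ) : multiPartial [] f = f := rfl

lemma multiPartial_cons (i : Fin n) (L : List (Fin n)) (f : (Fin n → ℝ) → ℝ) :
    multiPartial (i :: L) f = fun x => fderiv ℝ (multiPartial L f) x (Pi.single i 1) := rfl

lemma multiPartial_append (L₁ L₂ : List (Fin n)) (f : (Fin n → ℝ) → ℝ) :
    multiPartial (L₁ ++ L₂) f = multiPartial L₁ (multiPartial L₂ f) := by
  simp [multiPartial, List.foldr_append]

/-- projection to the last n coordinates -/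
def pr (p : Fin (n + 1) → ℝ) : Fin n → ℝ := fun i => p (Fin.succ i)

lemma continuous_pr : Continuous (pr (n := n)) :=
  continuous_pi fun i => continuous_apply (Fin.succ i)

lemma dist_pr_le (p q : Fin (n + 1) → ℝ) : dist (pr p) (pr q) ≤ dist p q :=
  dist_pi_le_iff dist_nonneg |>.mpr fun i => dist_le_pi_dist p q (Fin.succ i)

/-- the "bad" set -/
def Bs (Z : Set (Fin n → ℝ)) : Set (Fin (n + 1) → ℝ) := {p | pr p ∈ Z}

lemma isClosed_Bs {Z : Set (Fin n → ℝ)} (hZ : IsClosed Z) : IsClosed (Bs Z) :=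
  hZ.preimage continuous_pr

lemma hasFDerivAt_zero_of_bound {f : (Fin (n + 1) → ℝ) → ℝ} {p : Fin (n + 1) → ℝ} {C : ℝ}
    (hC : 0 ≤ C) (h : ∀ᶠ q in nhds p, |f q| ≤ C * ‖q - p‖ ^ 2) :
    HasFDerivAt f (0 : (Fin (n + 1) → ℝ) →L[ℝ] ℝ) p := by
  have hfp : f p = 0 := by
    have h0 := h.self_of_nhds
    simp only [sub_self, norm_zero] at h0
    have : |f p| ≤ 0 := by simpa using h0
    exact abs_eq_zero.mp (le_antisymm this (abs_nonneg _))
  rw [hasFDerivAt_iff_isLittleO, isLittleO_iff]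
  intro c hc
  have hδ : 0 < c / (C + 1) := div_pos hc (by linarith)
  filter_upwards [h, Metric.closedBall_mem_nhds p hδ] with q hq hq'
  have hqp : ‖q - p‖ ≤ c / (C + 1) := by
    rwa [← dist_eq_norm, ← Metric.mem_closedBall]
  simp only [hfp, sub_zero, ContinuousLinearMap.zero_apply, Real.norm_eq_abs]
  have hn : (0:ℝ) ≤ ‖q - p‖ := norm_nonneg _
  calc |f q| ≤ C * ‖q - p‖ ^ 2 := hq
    _ = C * ‖q - p‖ * ‖q - p‖ := by ring
    _ ≤ c * ‖q - p‖ := by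
        apply mul_le_mul_of_nonneg_right _ hn
        have : C * ‖q - p‖ ≤ C * (c / (C + 1)) := mul_le_mul_of_nonneg_left hqp hC
        have h2 : C * (c / (C + 1)) ≤ c := by
          rw [mul_div_assoc']
          rw [div_le_iff₀ (by linarith)]
          nlinarith
        linarith
    _ = c * ‖q - p‖ := rfl

/-- Key: a function vanishing on `G ∩ Bs` with a quadratic-or-better bound off `Bs`
has full derivative zero at points of `G ∩ Bs`. -/
lemma key_deriv {Z : Set (Fin n → ℝ)} {G : Set (Fin (n + 1) → ℝ)} (hG : IsOpen G)
    {g : (Fin (n + 1) → ℝ) → ℝ} {A : ℝ} (hA : 0 ≤ A) {e : ℕ} (he : 2 ≤ e)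
    {p : Fin (n + 1) → ℝ} (hp : p ∈ G) (hpz : pr p ∈ Z)
    (hgz : ∀ q ∈ G, pr q ∈ Z → g q = 0)
    (hgb : ∀ q ∈ G \ Bs Z, |g q| ≤ A * infDist (pr q) Z ^ e) :
    HasFDerivAt g (0 : (Fin (n + 1) → ℝ) →L[ℝ] ℝ) p := by
  apply hasFDerivAt_zero_of_bound hA
  obtain ⟨ε, hε, hball⟩ := Metric.isOpen_iff.mp hG p hp
  have hmin : 0 < min ε 1 := lt_min hε one_pos
  filter_upwards [Metric.ball_mem_nhds p hmin] with q hq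
  have hqG : q ∈ G := hball (Metric.ball_subset_ball (min_le_left _ _) hq)
  have hq1 : ‖q - p‖ < 1 := by
    rw [← dist_eq_norm]; exact lt_of_lt_of_le hq (min_le_right _ _)
  have hn0 : (0:ℝ) ≤ ‖q - p‖ := norm_nonneg _
  by_cases hqz : pr q ∈ Z
  · rw [hgz q hqG hqz]
    simpa using mul_nonneg hA (by positivity)
  · have hd : infDist (pr q) Z ≤ ‖q - p‖ := by
      calc infDist (pr q) Z ≤ dist (pr q) (pr p) := infDist_le_dist_of_mem hpz
        _ ≤ dist q p := dist_pr_le q p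
        _ = ‖q - p‖ := dist_eq_norm q p
    have hd0 : 0 ≤ infDist (pr q) Z := infDist_nonneg
    calc |g q| ≤ A * infDist (pr q) Z ^ e := hgb q ⟨hqG, hqz⟩
      _ ≤ A * ‖q - p‖ ^ e := by
          exact mul_le_mul_of_nonneg_left (pow_le_pow_left₀ hd0 hd e) hA
      _ ≤ A * ‖q - p‖ ^ 2 :=
          mul_le_mul_of_nonneg_left (pow_le_pow_of_le_one hn0 hq1.le he) hA

/-- All iterated partials of length ≤ k vanish on `G ∩ Bs`. -/
lemma vanish {Z : Set (Fin n → ℝ)} {G : Set (Fin (n + 1) → ℝ)} (hG : IsOpen G)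
    (k : ℕ) {f : (Fin (n + 1) → ℝ) → ℝ} {A : ℝ} (hA : 0 ≤ A)
    (hv : ∀ p ∈ G, pr p ∈ Z → f p = 0)
    (hb : ∀ L : List (Fin (n + 1)), L.length ≤ k → ∀ p ∈ G \ Bs Z,
      |multiPartial L f p| ≤ A * infDist (pr p) Z ^ (k + 1 - L.length)) :
    ∀ L : List (Fin (n + 1)), L.length ≤ k →
      ∀ p ∈ G, pr p ∈ Z → multiPartial L f p = 0 := by
  intro L
  induction L with
  | nil => intro _ p hp hpz; exact hv p hp hpz
  | cons i L ih =>
    intro hlen p hp hpz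
    have hlen' : L.length ≤ k := by simp at hlen; omega
    have he : 2 ≤ k + 1 - L.length := by simp at hlen; omega
    have hzero : HasFDerivAt (multiPartial L f)
        (0 : (Fin (n + 1) → ℝ) →L[ℝ] ℝ) p :=
      key_deriv hG hA he hp hpz (fun q hq hqz => ih hlen' q hq hqz)
        (hb L hlen')
    rw [multiPartial_cons]
    simp [hzero.fderiv]

lemma aux {Z : Set (Fin n → ℝ)} {G : Set (Fin (n + 1) → ℝ)}
    (hZ : IsClosed Z) (hG : IsOpen G) :
    ∀ (k : ℕ) (f : (Fin (n + 1) → ℝ) → ℝ) (A : ℝ), 0 ≤ A →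
    (∀ p ∈ G, pr p ∈ Z → f p = 0) →
    ContDiffOn ℝ k f (G \ Bs Z) →
    (∀ L : List (Fin (n + 1)), L.length ≤ k → ∀ p ∈ G \ Bs Z,
      |multiPartial L f p| ≤ A * infDist (pr p) Z ^ (k + 1 - L.length)) →
    ContDiffOn ℝ k f G := by
  have hopen : IsOpen (G \ Bs Z) := hG.sdiff (isClosed_Bs hZ)
  intro k
  induction k with
  | zero =>
    intro f A hA hv hs hb
    rw [show ((0:ℕ):WithTop ℕ∞) = 0 from rfl, contDiffOn_zero] at hs ⊢
    intro p hp
    by_cases hpz : pr p ∈ Z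
    · apply ContinuousAt.continuousWithinAt
      have hfp : f p = 0 := hv p hp hpz
      rw [ContinuousAt, hfp]
      obtain ⟨ε, hε, hball⟩ := Metric.isOpen_iff.mp hG p hp
      apply squeeze_zero_norm' (a := fun q => A * ‖q - p‖)
      · filter_upwards [Metric.ball_mem_nhds p hε] with q hq
        have hqG : q ∈ G := hball hq
        rw [Real.norm_eq_abs]
        by_cases hqz : pr q ∈ Z
        · rw [hv q hqG hqz]; simpa using mul_nonneg hA (norm_nonneg _)
        · have := hb [] (by simp) q ⟨hqG, hqz⟩
          simp only [multiPartial_nil, List.length_nil, Nat.sub_zero] at this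
          calc |f q| ≤ A * infDist (pr q) Z ^ 1 := this
            _ ≤ A * ‖q - p‖ := by
                rw [pow_one]
                apply mul_le_mul_of_nonneg_left _ hA
                calc infDist (pr q) Z ≤ dist (pr q) (pr p) := infDist_le_dist_of_mem hpz
                  _ ≤ dist q p := dist_pr_le q p
                  _ = ‖q - p‖ := dist_eq_norm q p
      · have : Continuous fun q : Fin (n+1) → ℝ => A * ‖q - p‖ := by continuity
        simpa using this.tendsto p
    · exact ((hs p ⟨hp, hpz⟩).continuousAt (hopen.mem_nhds ⟨hp, hpz⟩)).continuousWithinAt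
  | succ k IH =>
    intro f A hA hv hs hb
    -- differentiability at every point of G
    have hdiff : ∀ p ∈ G, DifferentiableAt ℝ f p := by
      intro p hp
      by_cases hpz : pr p ∈ Z
      · refine (key_deriv hG hA (show 2 ≤ k + 2 by omega) hp hpz hv (fun q hq => ?_)).differentiableAt
        have := hb [] (by simp) q hq
        simpa [multiPartial_nil, add_assoc] using this
      · exact ((hs.differentiableOn (by simp)) p
          ⟨hp, hpz⟩).differentiableAt (hopen.mem_nhds ⟨hp, hpz⟩)
    -- the directional derivatives
    set g : Fin (n + 1) → ((Fin (n + 1) → ℝ) → ℝ) :=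
      fun i => multiPartial [i] f with hg
    have hgsm : ∀ i, ContDiffOn ℝ k (g i) G := by
      intro i
      apply IH (g i) A hA
      · intro p hp hpz
        exact vanish hG (k + 1) hA hv hb [i] (by simp) p hp hpz
      · have hs' : ContDiffOn ℝ ((k : WithTop ℕ∞) + 1) f (G \ Bs Z) := by
          exact_mod_cast hs
        have hfd : ContDiffOn ℝ k (fderiv ℝ f) (G \ Bs Z) :=
          ((contDiffOn_succ_iff_fderiv_of_isOpen hopen).mp hs').2.2
        have : ContDiffOn ℝ k (fun p => fderiv ℝ f p (Pi.single i 1)) (G \ Bs Z) :=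
          hfd.clm_apply contDiffOn_const
        exact this
      · intro L hL p hp
        have h1 : multiPartial L (g i) p = multiPartial (L ++ [i]) f p := by
          rw [multiPartial_append]
        rw [h1]
        have := hb (L ++ [i]) (by simp only [List.length_append, List.length_cons, List.length_nil]; omega) p hp
        have harith : k + 1 + 1 - (L ++ [i]).length = k + 1 - L.length := by
          simp only [List.length_append, List.length_cons, List.length_nil]; omega
        rwa [harith] at this
    -- fderiv f = sum of directional derivatives
    have hfe : ∀ p ∈ G, fderiv ℝ f p =
        ∑ i : Fin (n + 1), g i p • ContinuousLinearMap.proj (R := ℝ) (φ := fun _ : Fin (n+1) => ℝ) i := by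
      intro p hp
      ext v
      have hv' : v = ∑ i : Fin (n + 1), v i • (Pi.single i 1 : Fin (n + 1) → ℝ) := by
        rw [← Finset.univ_sum_single v]
        refine Finset.sum_congr rfl fun i _ => ?_
        ext j
        rcases eq_or_ne j i with h | h <;>
          simp [Pi.single_apply, h]
      conv_lhs => rw [hv']
      rw [map_sum]
      simp only [map_smul, ContinuousLinearMap.sum_apply, ContinuousLinearMap.smul_apply,
        ContinuousLinearMap.proj_apply]
      congr 1
      ext i
      rw [smul_eq_mul, smul_eq_mul, mul_comm]
      rfl
    have hsum : ContDiffOn ℝ k (fun p =>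
        ∑ i : Fin (n + 1), g i p • ContinuousLinearMap.proj (R := ℝ) (φ := fun _ : Fin (n+1) => ℝ) i) G := by
      apply ContDiffOn.sum
      intro i _
      exact (hgsm i).smul contDiffOn_const
    have hcast : ((k + 1 : ℕ) : WithTop ℕ∞) = (k : WithTop ℕ∞) + 1 := by push_cast; rfl
    rw [hcast, contDiffOn_succ_iff_fderiv_of_isOpen hG]
    refine ⟨fun p hp => (hdiff p hp).differentiableWithinAt, ?_, ?_⟩
    · intro h; exact absurd h (by simp)
    · exact hsum.congr hfe



end CRExt

/-- Steps 1–3 of the proof of Theorem 2: we identify `ℝ × ℝⁿ` with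
`Fin (n+1) → ℝ`, a point `p` corresponding to `(p 0, p ∘ Fin.succ)`. If `Z ⊆ ℝⁿ` is closed,
`G ⊆ ℝ × ℝⁿ` is open, `X : G → ℝ` vanishes on `G ∩ (ℝ × Z)`, is `C^r` off `ℝ × Z`, and
`|∂^α X(ξ, x)| ≤ A · dist(x, Z)^{r+1−|α|}` on `G \ (ℝ × Z)` for all `|α| ≤ r`, then `X` is
`C^r` on `G` and all `∂^α X` with `|α| ≤ r` vanish on `G ∩ (ℝ × Z)`. -/
theorem cr_extension_across_zero_set
    {n : ℕ} (r : ℕ)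
    (Z : Set (Fin n → ℝ)) (hZ : IsClosed Z)
    (G : Set (Fin (n + 1) → ℝ)) (hG : IsOpen G)
    (X : (Fin (n + 1) → ℝ) → ℝ)
    (hvanish : ∀ p ∈ G, (fun i => p (Fin.succ i)) ∈ Z → X p = 0)
    (hsmooth : ContDiffOn ℝ r X (G \ {p | (fun i => p (Fin.succ i)) ∈ Z}))
    (A : ℝ) (hA : 0 < A)
    (hbound : ∀ L : List (Fin (n + 1)), L.length ≤ r →
      ∀ p ∈ G \ {p | (fun i => p (Fin.succ i)) ∈ Z},
        |multiPartial L X p|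
          ≤ A * infDist (fun i => p (Fin.succ i)) Z ^ (r + 1 - L.length)) :
    ContDiffOn ℝ r X G ∧
      ∀ L : List (Fin (n + 1)), L.length ≤ r →
        ∀ p ∈ G, (fun i => p (Fin.succ i)) ∈ Z → multiPartial L X p = 0 := by
  exact ⟨CRExt.aux hZ hG r X A hA.le hvanish hsmooth hbound,
    CRExt.vanish hG r hA.le hvanish hbound⟩
end
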